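/- Let p_w be a canonical class and s_i = (i,i+1) a simple transposition. (1) If ℓ(w s_i) > ℓ(w) then p_w(v) = p_w(v s_i) for every v ∈ S_n. (2) If ℓ(s_i w) > ℓ(w) then s_i(p_w(v)) = p_w(s_i v) for every v ∈ S_n. -/

import Mathlib

open MvPolynomial Equiv Finset

noncomputable section

/-- The polynomial ring ℂ[t₁,…,tₙ]. -/
abbrev Pol (n : ℕ) : Type := MvPolynomial (Fin n) ℂ

/-- The action of a permutation `w` on polynomials by the substitution `tᵢ ↦ t_{w(i)}`. -/
def pact {n : ℕ} (w : Perm (Fin n)) (f : Pol n) : Pol n := rename ⇑w f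

/-- The GKM condition defining `R ⊆ ∏_{v ∈ Sₙ} ℂ[t₁,…,tₙ]`: for every `v` and every
transposition `(i j)` with `i < j`, the difference `p(v) − p((i j)v)` is divisible by
`tᵢ − tⱼ`. -/
def GKM (n : ℕ) (p : Perm (Fin n) → Pol n) : Prop :=
  ∀ (v : Perm (Fin n)) (i j : Fin n), i < j →
    (X i - X j : Pol n) ∣ (p v - p (Equiv.swap i j * v))

/-- The length of a permutation: its number of inversions. -/
def len {n : ℕ} (w : Perm (Fin n)) : ℕ :=
  (Finset.univ.filter fun q : Fin n × Fin n => q.1 < q.2 ∧ w q.2 < w q.1).card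

/-- Bruhat order: the partial order generated by `u < (i j) u` whenever `ℓ(u) < ℓ((i j)u)`. -/
def bruhatLE {n : ℕ} : Perm (Fin n) → Perm (Fin n) → Prop :=
  Relation.ReflTransGen
    (fun u v => (∃ i j : Fin n, i < j ∧ v = Equiv.swap i j * u) ∧ len u < len v)

/-- `p` is the canonical class (equivariant Schubert class) of `w`:
(i) each component is homogeneous of degree `ℓ(w)`; (ii) `p(v) = 0` unless `v ≥ w` in
Bruhat order; (iii) `p(w) = ∏ (tᵢ − tⱼ)` over pairs `i < j` with `ℓ((i j)w) < ℓ(w)`;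
and `p` satisfies the GKM conditions. -/
def IsCanonical {n : ℕ} (w : Perm (Fin n)) (p : Perm (Fin n) → Pol n) : Prop :=
  GKM n p ∧
  (∀ v, (p v).IsHomogeneous (len w)) ∧
  (∀ v, ¬ bruhatLE w v → p v = 0) ∧
  p w = ∏ q ∈ Finset.univ.filter
      (fun q : Fin n × Fin n => q.1 < q.2 ∧ len (Equiv.swap q.1 q.2 * w) < len w),
      (X q.1 - X q.2 : Pol n)

/-- The simple transposition `sᵢ = (i, i+1)`. -/
def sT (n i : ℕ) (h : i + 1 < n) : Perm (Fin n) :=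
  Equiv.swap ⟨i, Nat.lt_of_succ_lt h⟩ ⟨i + 1, h⟩

/-- The dot (left) action: `(w·p)(v) = w(p(w⁻¹ v))`. -/
def dot {n : ℕ} (w : Perm (Fin n)) (p : Perm (Fin n) → Pol n) : Perm (Fin n) → Pol n :=
  fun v => pact w (p (w⁻¹ * v))

/-- The star (right) action: `(p * w)(v) = p(vw)`. -/
def starAct {n : ℕ} (p : Perm (Fin n) → Pol n) (w : Perm (Fin n)) :
    Perm (Fin n) → Pol n :=
  fun v => p (v * w)

/-- `R` as a `ℂ[t₁,…,tₙ]`-submodule of the product. -/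
def gkmSubmodule (n : ℕ) : Submodule (Pol n) (Perm (Fin n) → Pol n) where
  carrier := {p | GKM n p}
  add_mem' := by
    intro a b ha hb v i j hij
    have h := dvd_add (ha v i j hij) (hb v i j hij)
    simpa [Pi.add_apply, add_sub_add_comm] using h
  zero_mem' := by
    intro v i j hij
    simp
  smul_mem' := by
    intro c p hp v i j hij
    have h := (hp v i j hij).mul_left c
    simpa [Pi.smul_apply, smul_eq_mul, mul_sub] using h

/-- The maximal ideal `𝔪 = (t₁,…,tₙ) ⊆ ℂ[t₁,…,tₙ]`. -/
def mIdeal (n : ℕ) : Ideal (Pol n) := Ideal.span (Set.range (X : Fin n → Pol n))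

/-- The submodule `𝔪R`: finite sums of products `c • p` with `c ∈ 𝔪` and `p ∈ R`. -/
def mR (n : ℕ) : Submodule (Pol n) (Perm (Fin n) → Pol n) :=
  Submodule.span (Pol n) {q | ∃ c ∈ mIdeal n, ∃ p, GKM n p ∧ q = c • p}


namespace Loc
variable {n : ℕ}

def invSet (v : Perm (Fin n)) : Finset (Fin n × Fin n) :=
  Finset.univ.filter fun q : Fin n × Fin n => q.1 < q.2 ∧ v q.2 < v q.1

lemma len_eq (v : Perm (Fin n)) : len v = (invSet v).card := rfl

lemma len_inv (v : Perm (Fin n)) : len v⁻¹ = len v := by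
  rw [len_eq, len_eq]
  apply Finset.card_bij (fun e _ => ((v⁻¹ e.2 : Fin n), (v⁻¹ e.1 : Fin n)))
  · intro e he
    simp only [invSet, Finset.mem_filter, Finset.mem_univ, true_and] at he ⊢
    refine ⟨he.2, by simpa using he.1⟩
  · intro e he e' he' h
    simp only [Prod.mk.injEq, EmbeddingLike.apply_eq_iff_eq] at h
    exact Prod.ext h.2 h.1
  · intro e he
    simp only [invSet, Finset.mem_filter, Finset.mem_univ, true_and] at he ⊢
    exact ⟨(v e.2, v e.1), ⟨he.2, by simpa using he.1⟩, by simp⟩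

lemma swap_adj_lt {p q x y : Fin n} (hq : (p : ℕ) + 1 = q) (hxy : x < y)
    (hne : ¬(x = p ∧ y = q)) : Equiv.swap p q x < Equiv.swap p q y := by
  rw [Equiv.swap_apply_def, Equiv.swap_apply_def]
  simp only [Fin.lt_def, Fin.ext_iff, not_and] at hxy hne ⊢
  split_ifs with h1 h2 h3 h4 h5 <;>
    omega

end Loc

namespace Loc2
open Loc
variable {n : ℕ}

lemma invSet_mul_swap_adj (v : Perm (Fin n)) {p q : Fin n} (hq : (p : ℕ) + 1 = q)
    (h : v p < v q) :
    invSet (v * Equiv.swap p q) =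
      insert (p, q) ((invSet v).image fun e => (Equiv.swap p q e.1, Equiv.swap p q e.2)) := by
  have hinv : ∀ x, (v * Equiv.swap p q) x = v (Equiv.swap p q x) := fun x => rfl
  ext e
  simp only [invSet, Finset.mem_filter, Finset.mem_univ, true_and, Finset.mem_insert,
    Finset.mem_image, hinv]
  constructor
  · rintro ⟨h1, h2⟩
    by_cases hpq : e.1 = p ∧ e.2 = q
    · exact Or.inl (Prod.ext hpq.1 hpq.2)
    · refine Or.inr ⟨(Equiv.swap p q e.1, Equiv.swap p q e.2), ⟨?_, by simpa using h2⟩, by simp⟩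
      exact swap_adj_lt hq h1 hpq
  · rintro (rfl | ⟨d, ⟨hd1, hd2⟩, rfl⟩)
    · refine ⟨by simp [Fin.lt_def, ← hq], ?_⟩
      rw [Equiv.swap_apply_left, Equiv.swap_apply_right]
      exact h
    · refine ⟨?_, by simpa using hd2⟩
      refine swap_adj_lt hq hd1 ?_
      rintro ⟨rfl, rfl⟩
      exact absurd hd2 (not_lt_of_gt h)

lemma len_mul_swap_adj (v : Perm (Fin n)) {p q : Fin n} (hq : (p : ℕ) + 1 = q)
    (h : v p < v q) : len (v * Equiv.swap p q) = len v + 1 := by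
  rw [len_eq, len_eq, invSet_mul_swap_adj v hq h, Finset.card_insert_of_notMem, Finset.card_image_of_injective]
  · intro a b hab
    simp only [Prod.ext_iff] at hab ⊢
    exact ⟨(Equiv.swap p q).injective hab.1, (Equiv.swap p q).injective hab.2⟩
  · simp only [Finset.mem_image, not_exists]
    rintro d ⟨hd, hd2⟩
    have h1 : d.1 = q := (Equiv.swap p q).injective
      (by simpa using congrArg Prod.fst hd2)
    have h2 : d.2 = p := (Equiv.swap p q).injective
      (by simpa using congrArg Prod.snd hd2)
    simp only [invSet, Finset.mem_filter] at hd
    have : q < p := h1 ▸ h2 ▸ hd.2.1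
    rw [Fin.lt_def] at this
    omega

lemma len_mul_swap_adj' (v : Perm (Fin n)) {p q : Fin n} (hq : (p : ℕ) + 1 = q)
    (h : v q < v p) : len (v * Equiv.swap p q) + 1 = len v := by
  have := len_mul_swap_adj (v * Equiv.swap p q) hq (by
    rw [show ((v * Equiv.swap p q) p) = v q by simp [Equiv.Perm.mul_apply],
        show ((v * Equiv.swap p q) q) = v p by simp [Equiv.Perm.mul_apply]]
    exact h)
  rwa [mul_swap_mul_self, eq_comm] at this

end Loc2

namespace Loc3
open Loc Loc2
variable {n : ℕ}

lemma len_mul_swap_lt : ∀ d : ℕ, ∀ v : Perm (Fin n), ∀ p q : Fin n,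
    (q : ℕ) - (p : ℕ) ≤ d → p < q → v q < v p → len (v * Equiv.swap p q) < len v := by
  intro d
  induction d with
  | zero =>
    intro v p q hd hpq _
    rw [Fin.lt_def] at hpq; omega
  | succ d ih =>
    intro v p q hd hpq hv
    rw [Fin.lt_def] at hpq
    by_cases hadj : (p : ℕ) + 1 = (q : ℕ)
    · have := len_mul_swap_adj' v hadj hv; omega
    · have hq2 : (p : ℕ) + 1 < (q : ℕ) := by omega
      have hmlt : (p : ℕ) + 1 < n := lt_trans hq2 q.isLt
      set m : Fin n := ⟨(p : ℕ) + 1, hmlt⟩ with hm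
      have hpm : (p : ℕ) + 1 = (m : ℕ) := rfl
      have hmq : m < q := by rw [Fin.lt_def]; exact hq2
      have hpmlt : p < m := by rw [Fin.lt_def]; exact Nat.lt_succ_self _
      have hqm : q ≠ m := ne_of_gt hmq
      have hqp : q ≠ p := ne_of_gt (by rw [Fin.lt_def]; omega)
      have hdecomp : Equiv.swap p q = Equiv.swap p m * Equiv.swap m q * Equiv.swap p m := by
        rw [show Equiv.swap p m = Equiv.swap m p from Equiv.swap_comm p m,
            show Equiv.swap m q = Equiv.swap q m from Equiv.swap_comm m q]
        exact (Equiv.swap_mul_swap_mul_swap hqm hqp).symm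
      set u1 := v * Equiv.swap p m with hu1
      set u2 := u1 * Equiv.swap m q with hu2
      have hfinal : v * Equiv.swap p q = u2 * Equiv.swap p m := by
        rw [hdecomp, hu2, hu1, ← mul_assoc, ← mul_assoc]
      have e1p : u1 p = v m := by
        rw [hu1]; simp [Equiv.Perm.mul_apply]
      have e1m : u1 m = v p := by
        rw [hu1]; simp [Equiv.Perm.mul_apply]
      have e1q : u1 q = v q := by
        rw [hu1]
        simp [Equiv.Perm.mul_apply, Equiv.swap_apply_of_ne_of_ne hqp hqm]
      have hpq' : p ≠ q := fun h => hqp h.symm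
      have hpmne : p ≠ m := ne_of_lt hpmlt
      have e2p : u2 p = v m := by
        rw [hu2]
        simp only [Equiv.Perm.mul_apply,
          Equiv.swap_apply_of_ne_of_ne hpmne hpq']
        exact e1p
      have e2m : u2 m = v q := by
        rw [hu2]; simp only [Equiv.Perm.mul_apply, Equiv.swap_apply_left]; exact e1q
      have e2q : u2 q = v p := by
        rw [hu2]; simp only [Equiv.Perm.mul_apply, Equiv.swap_apply_right]; exact e1m
      have step2 : len u2 < len u1 := by
        refine ih u1 m q (by simp only [hm]; omega) hmq ?_
        rw [e1q, e1m]; exact hv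
      have hv' : (v q : ℕ) < (v p : ℕ) := hv
      have hmp' : v m ≠ v p := fun h => hpmne (v.injective h).symm
      have hmq' : v m ≠ v q := fun h => hqm (v.injective h).symm
      rw [hfinal]
      rcases lt_or_gt_of_ne hmp' with hcb | hbc
      · have step1 : len u1 + 1 = len v := len_mul_swap_adj' v hpm hcb
        rcases lt_or_gt_of_ne hmq' with hca | hac
        · have step3 : len (u2 * Equiv.swap p m) = len u2 + 1 :=
            len_mul_swap_adj u2 hpm (by rw [e2p, e2m]; exact hca)
          omega
        · have step3 : len (u2 * Equiv.swap p m) + 1 = len u2 :=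
            len_mul_swap_adj' u2 hpm (by rw [e2m, e2p]; exact hac)
          omega
      · have step1 : len u1 = len v + 1 := len_mul_swap_adj v hpm hbc
        rcases lt_or_gt_of_ne hmq' with hca | hac
        · have hbc' : (v p : ℕ) < v m := hbc
          have hca' : (v m : ℕ) < v q := hca
          omega
        · have step3 : len (u2 * Equiv.swap p m) + 1 = len u2 :=
            len_mul_swap_adj' u2 hpm (by rw [e2m, e2p]; exact hac)
          omega

end Loc3

namespace Loc4
open Loc Loc2 Loc3
variable {n : ℕ}

lemma len_mul_swap_lt' (v : Perm (Fin n)) {p q : Fin n} (hpq : p < q) (h : v q < v p) :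
    len (v * Equiv.swap p q) < len v :=
  len_mul_swap_lt ((q : ℕ) - p) v p q le_rfl hpq h

lemma len_mul_swap_gt (v : Perm (Fin n)) {p q : Fin n} (hpq : p < q) (h : v p < v q) :
    len v < len (v * Equiv.swap p q) := by
  have := len_mul_swap_lt' (v * Equiv.swap p q) hpq (by
    simp only [Equiv.Perm.mul_apply, Equiv.swap_apply_left, Equiv.swap_apply_right]
    exact h)
  rwa [mul_swap_mul_self] at this

/-- left multiplication by a swap of values -/
lemma swap_mul_eq (v : Perm (Fin n)) (p q : Fin n) :
    Equiv.swap (v p) (v q) * v = v * Equiv.swap p q :=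
  (Equiv.mul_swap_eq_swap_mul v p q).symm

lemma len_swap_mul_lt {a b : Fin n} (hab : a < b) (v : Perm (Fin n))
    (h : v⁻¹ b < v⁻¹ a) : len (Equiv.swap a b * v) < len v := by
  have key : Equiv.swap a b * v = v * Equiv.swap (v⁻¹ b) (v⁻¹ a) := by
    have := swap_mul_eq v (v⁻¹ b) (v⁻¹ a)
    simp only [← Equiv.Perm.mul_apply, mul_inv_cancel, Equiv.Perm.one_apply] at this
    rw [← this, Equiv.swap_comm]
  rw [key]
  exact len_mul_swap_lt' v h (by simp [hab])

lemma len_swap_mul_gt {a b : Fin n} (hab : a < b) (v : Perm (Fin n))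
    (h : v⁻¹ a < v⁻¹ b) : len v < len (Equiv.swap a b * v) := by
  have := len_swap_mul_lt hab (Equiv.swap a b * v) (by
    simp only [mul_inv_rev, Equiv.Perm.mul_apply, Equiv.swap_inv, Equiv.swap_apply_left,
      Equiv.swap_apply_right]
    exact h)
  rwa [← mul_assoc, swap_mul_self, one_mul] at this

end Loc4

namespace Loc5
open Loc Loc2 Loc3 Loc4
variable {n : ℕ}

lemma len_swap_mul_adj (u : Perm (Fin n)) {p q : Fin n} (hq : (p : ℕ) + 1 = q)
    (h : u⁻¹ p < u⁻¹ q) : len (Equiv.swap p q * u) = len u + 1 := by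
  rw [← len_inv, mul_inv_rev, Equiv.swap_inv, ← len_inv u]
  exact len_mul_swap_adj u⁻¹ hq h

lemma len_swap_mul_adj' (u : Perm (Fin n)) {p q : Fin n} (hq : (p : ℕ) + 1 = q)
    (h : u⁻¹ q < u⁻¹ p) : len (Equiv.swap p q * u) + 1 = len u := by
  rw [← len_inv, mul_inv_rev, Equiv.swap_inv, ← len_inv u]
  exact len_mul_swap_adj' u⁻¹ hq h

end Loc5

namespace Loc6
variable {n : ℕ}

abbrev Pol' (n : ℕ) : Type := MvPolynomial (Fin n) ℂ

lemma prime_X_sub_X {a b : Fin n} (hab : a ≠ b) : Prime (X a - X b : Pol' n) := by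
  classical
  let e := Equiv.optionSubtypeNe a
  let ψ := ((renameEquiv ℂ e.symm).trans (optionEquivLeft ℂ {x : Fin n // x ≠ a}))
  rw [← MulEquiv.prime_iff ψ]
  have h1 : ψ (X a - X b) =
      Polynomial.X - Polynomial.C (X ⟨b, fun h => hab h.symm⟩) := by
    simp only [ψ, AlgEquiv.trans_apply, map_sub, renameEquiv_apply, rename_X]
    rw [Equiv.optionSubtypeNe_symm_self, Equiv.optionSubtypeNe_symm_of_ne (fun h => hab h.symm)]
    rw [optionEquivLeft_X_none, optionEquivLeft_X_some]
  show Prime (ψ (X a - X b))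
  rw [h1]
  exact Polynomial.prime_X_sub_C _

lemma eval_X_sub_X (c : Fin n → ℂ) (a b : Fin n) :
    eval c (X a - X b : Pol' n) = c a - c b := by simp

lemma not_dvd_X_sub_X {a b c d : Fin n} (hab : a < b) (hcd : c < d)
    (hne : (a, b) ≠ (c, d)) : ¬ (X c - X d : Pol' n) ∣ (X a - X b) := by
  rintro ⟨g, hg⟩
  have hab' : a ≠ b := ne_of_lt hab
  obtain ⟨e, he1, he2, he3⟩ : ∃ e : Fin n, (e = a ∨ e = b) ∧ e ≠ c ∧ e ≠ d := by
    by_cases hac : a = c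
    · refine ⟨b, Or.inr rfl, fun h => ?_, fun h => ?_⟩
      · exact hab' (hac.trans h.symm)
      · exact hne (by rw [hac, h])
    · by_cases had : a = d
      · refine ⟨b, Or.inr rfl, fun h => ?_, fun h => hab' (had.trans h.symm)⟩
        · rw [Fin.lt_def] at hab hcd
          rw [← had, ← h] at hcd
          omega
      · exact ⟨a, Or.inl rfl, hac, had⟩
  have := congrArg (eval fun t => if t = e then (1 : ℂ) else 0) hg
  rw [map_mul] at this
  rw [eval_X_sub_X, eval_X_sub_X] at this
  rw [if_neg (fun h : c = e => he2 h.symm), if_neg (fun h : d = e => he3 h.symm)] at this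
  rcases he1 with rfl | rfl
  · rw [if_pos rfl, if_neg (fun h : b = e => hab' h.symm)] at this
    simp at this
  · rw [if_neg (fun h : a = e => hab' h), if_pos rfl] at this
    simp at this

lemma prod_pairs_dvd (S : Finset (Fin n × Fin n)) (hS : ∀ e ∈ S, e.1 < e.2) (f : Pol' n)
    (hdvd : ∀ e ∈ S, (X e.1 - X e.2 : Pol' n) ∣ f) :
    (∏ e ∈ S, (X e.1 - X e.2 : Pol' n)) ∣ f := by
  classical
  induction S using Finset.induction generalizing f with
  | empty => simpa using dvd_refl f -- one_dvd
  | @insert e S hnot ih =>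
    obtain ⟨g, hg⟩ := hdvd e (Finset.mem_insert_self e S)
    rw [Finset.prod_insert hnot, hg]
    refine mul_dvd_mul_left _ (ih (fun e' he' => hS e' (Finset.mem_insert_of_mem he')) g
      (fun e' he' => ?_))
    have hp := prime_X_sub_X (ne_of_lt (hS e' (Finset.mem_insert_of_mem he')))
    have hd : (X e'.1 - X e'.2 : Pol' n) ∣ (X e.1 - X e.2) * g := by
      rw [← hg]; exact hdvd e' (Finset.mem_insert_of_mem he')
    rcases hp.2.2 _ _ hd with h | h
    · exfalso
      refine not_dvd_X_sub_X (hS e (Finset.mem_insert_self e S))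
        (hS e' (Finset.mem_insert_of_mem he')) (fun hee => ?_) h
      have : e = e' := Prod.ext (congrArg Prod.fst hee) (congrArg Prod.snd hee)
      exact hnot (this ▸ he')
    · exact h

lemma le_deg_of_dvd {h f : Pol' n} {k D : ℕ} (hh : h.IsHomogeneous k)
    (hf : f.IsHomogeneous D) (hne : f ≠ 0) (hdvd : h ∣ f) : k ≤ D := by
  classical
  obtain ⟨g, rfl⟩ := hdvd
  by_contra hlt
  push_neg at hlt
  apply hne
  apply (MvPolynomial.ext _ _)
  intro d
  rw [coeff_zero]
  by_cases hd : d.degree = D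
  · rw [MvPolynomial.coeff_mul]
    refine Finset.sum_eq_zero fun x hx => ?_
    rw [Finset.HasAntidiagonal.mem_antidiagonal] at hx
    have hx1 : (x.1).degree ≤ D := by
      rw [← hd, ← hx]
      simp only [Finsupp.degree_eq_weight_one, map_add]
      exact Nat.le_add_right _ _
    have : coeff x.1 h = 0 := hh.coeff_eq_zero (by omega)
    rw [this, zero_mul]
  · exact hf.coeff_eq_zero hd

lemma sub_rename_swap_dvd (a b : Fin n) (f : Pol' n) :
    (X a - X b : Pol' n) ∣ f - rename ⇑(Equiv.swap a b) f := by
  classical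
  induction f using MvPolynomial.induction_on with
  | C c => simp
  | add p q hp hq =>
    rw [map_add]
    have : p + q - (rename ⇑(Equiv.swap a b) p + rename ⇑(Equiv.swap a b) q)
        = (p - rename ⇑(Equiv.swap a b) p) + (q - rename ⇑(Equiv.swap a b) q) := by ring
    rw [this]
    exact dvd_add hp hq
  | mul_X p i hp =>
    rw [map_mul, rename_X]
    have key : p * X i - rename ⇑(Equiv.swap a b) p * X (Equiv.swap a b i)
        = (p - rename ⇑(Equiv.swap a b) p) * X i
          + rename ⇑(Equiv.swap a b) p * (X i - X (Equiv.swap a b i)) := by ring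
    rw [key]
    refine dvd_add (Dvd.dvd.mul_right hp _) (Dvd.dvd.mul_left ?_ _)
    rcases eq_or_ne i a with rfl | hia
    · rw [Equiv.swap_apply_left]
    · rcases eq_or_ne i b with rfl | hib
      · rw [Equiv.swap_apply_right]
        exact ⟨-1, by ring⟩
      · rw [Equiv.swap_apply_of_ne_of_ne hia hib]
        simp

end Loc6

namespace Loc7
open Loc Loc2 Loc3 Loc4 Loc5 Loc6
variable {n : ℕ}

lemma bruhat_len_le {w v : Perm (Fin n)} (h : bruhatLE w v) : len w ≤ len v := by
  induction h with
  | refl => exact le_rfl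
  | tail h1 h2 ih => exact le_trans ih (le_of_lt h2.2)

lemma bruhat_eq_of_len_le {w v : Perm (Fin n)} (h : bruhatLE w v) (hl : len v ≤ len w) :
    w = v := by
  rcases Relation.ReflTransGen.cases_tail h with rfl | ⟨u, h1, h2⟩
  · rfl
  · exact absurd (lt_of_le_of_lt (bruhat_len_le h1) h2.2) (not_lt.mpr hl)

lemma gkm_pair {p : Perm (Fin n) → Pol n} (hp : GKM n p) {a b : Fin n} (hab : a ≠ b)
    (v : Perm (Fin n)) :
    (X a - X b : Pol n) ∣ (p v - p (Equiv.swap a b * v)) := by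
  rcases lt_or_gt_of_ne hab with h | h
  · exact hp v a b h
  · have := hp v b a h
    rw [Equiv.swap_comm a b]
    obtain ⟨g, hg⟩ := this
    exact ⟨-g, by rw [hg]; ring⟩

end Loc7

namespace Loc8
open Loc Loc2 Loc3 Loc4 Loc5 Loc6 Loc7
variable {n : ℕ}

lemma core {r : Perm (Fin n) → Pol n} {D : ℕ} (hg : GKM n r)
    (hhom : ∀ v, (r v).IsHomogeneous D) (v : Perm (Fin n)) (hv : r v ≠ 0)
    (hmin : ∀ u, len u < len v → r u = 0) {a b : Fin n} (hab : a < b)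
    (hnoninv : v⁻¹ a < v⁻¹ b) (hdvd : (X a - X b : Pol n) ∣ r v) :
    len v < D := by
  classical
  set S : Finset (Fin n × Fin n) :=
    Finset.univ.filter (fun e : Fin n × Fin n => e.1 < e.2 ∧ v⁻¹ e.2 < v⁻¹ e.1) with hS
  have hcard : S.card = len v := by rw [← len_inv v]; rfl
  have habS : (a, b) ∉ S := by
    simp only [hS, Finset.mem_filter, Finset.mem_univ, true_and, not_and]
    intro _
    exact not_lt.mpr (le_of_lt hnoninv)
  have hSsorted : ∀ e ∈ insert (a, b) S, e.1 < e.2 := by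
    intro e he
    rcases Finset.mem_insert.mp he with rfl | heS
    · exact hab
    · exact ((Finset.mem_filter.mp heS).2).1
  have hdvdall : ∀ e ∈ insert (a, b) S, (X e.1 - X e.2 : Pol n) ∣ r v := by
    intro e he
    rcases Finset.mem_insert.mp he with rfl | heS
    · exact hdvd
    · obtain ⟨he1, he2⟩ := (Finset.mem_filter.mp heS).2
      have hlen := len_swap_mul_lt he1 v he2
      have hdd := hg v e.1 e.2 he1
      rw [hmin _ hlen, sub_zero] at hdd
      exact hdd
  have hprod := prod_pairs_dvd _ hSsorted (r v) hdvdall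
  have hprodhom : (∏ e ∈ insert (a, b) S, (X e.1 - X e.2 : Pol n)).IsHomogeneous
      ((insert (a, b) S).card) := by
    have := MvPolynomial.IsHomogeneous.prod (insert (a, b) S)
      (fun e => (X e.1 - X e.2 : Pol n)) (fun _ => 1)
      (fun e _ => ((isHomogeneous_X ℂ e.1).sub (isHomogeneous_X ℂ e.2)))
    simpa using this
  have hle := le_deg_of_dvd hprodhom (hhom v) hv hprod
  rw [Finset.card_insert_of_notMem habS, hcard] at hle
  omega

end Loc8

open Loc Loc2 Loc3 Loc4 Loc5 Loc6 Loc7 Loc8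

/-- localization formulas.  (1) If `ℓ(wsᵢ) > ℓ(w)` then
`p_w(v) = p_w(vsᵢ)` for every `v`.  (2) If `ℓ(sᵢw) > ℓ(w)` then
`sᵢ(p_w(v)) = p_w(sᵢv)` for every `v`. -/
theorem localization_formulas (n : ℕ) (hn : 1 ≤ n)
    (pw : Perm (Fin n) → Perm (Fin n) → Pol n)
    (hpw : ∀ w, IsCanonical w (pw w))
    (w : Perm (Fin n)) (i : ℕ) (hi : i + 1 < n) :
    (len w < len (w * sT n i hi) → ∀ v, pw w v = pw w (v * sT n i hi)) ∧
    (len w < len (sT n i hi * w) → ∀ v, pact (sT n i hi) (pw w v) = pw w (sT n i hi * v)) := by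
  classical
  obtain ⟨hgkm, hhom, hvan, -⟩ := hpw w
  set s := sT n i hi with hs
  set ii : Fin n := ⟨i, Nat.lt_of_succ_lt hi⟩ with hii
  set jj : Fin n := ⟨i + 1, hi⟩ with hjj
  have hsdef : s = Equiv.swap ii jj := rfl
  have hij : (ii : ℕ) + 1 = (jj : ℕ) := rfl
  have hiijj : ii < jj := by rw [Fin.lt_def]; exact Nat.lt_succ_self _
  have hss : s * s = 1 := Equiv.swap_mul_self _ _
  constructor
  · -- part 1
    intro hlen
    set r : Perm (Fin n) → Pol n := fun u => pw w u - pw w (u * s) with hr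
    have hrgkm : GKM n r := by
      intro v' c d hcd
      have h1 := hgkm v' c d hcd
      have h2 := hgkm (v' * s) c d hcd
      have hre : r v' - r (Equiv.swap c d * v') =
          (pw w v' - pw w (Equiv.swap c d * v'))
            - (pw w (v' * s) - pw w (Equiv.swap c d * (v' * s))) := by
        rw [hr]
        simp only [mul_assoc]
        ring
      rw [hre]
      exact dvd_sub h1 h2
    have hrhom : ∀ u, (r u).IsHomogeneous (len w) := fun u => (hhom u).sub (hhom (u * s))
    have hru : ∀ u, r (u * s) = - r u := by
      intro u
      rw [hr]
      simp only [mul_assoc, hss, mul_one]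
      ring
    have main : ∀ k : ℕ, ∀ u : Perm (Fin n), len u = k → r u = 0 := by
      intro k
      induction k using Nat.strong_induction_on with
      | _ k ih =>
        intro u hk
        by_contra h0
        have hmin : ∀ u' : Perm (Fin n), len u' < len u → r u' = 0 :=
          fun u' h' => ih (len u') (hk ▸ h') u' rfl
        have hneq : u ii ≠ u jj := fun h => (ne_of_lt hiijj) (u.injective h)
        rcases lt_or_gt_of_ne hneq with hlt | hgt
        · -- ascent case: use core
          have husw : u * s = Equiv.swap (u ii) (u jj) * u := by
            rw [hsdef, swap_mul_eq u ii jj]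
          have hdvd : (X (u ii) - X (u jj) : Pol n) ∣ r u := by
            rw [hr]
            simp only
            rw [husw]
            exact hgkm u (u ii) (u jj) hlt
          have hinva : u⁻¹ (u ii) < u⁻¹ (u jj) := by
            simp only [← Equiv.Perm.mul_apply, inv_mul_cancel, Equiv.Perm.one_apply]
            exact hiijj
          have hcore : len u < len w := core hrgkm hrhom u h0 hmin hlt hinva hdvd
          have pu0 : pw w u = 0 :=
            hvan u (fun hb => absurd (bruhat_len_le hb) (not_le.mpr hcore))
          have pus0 : pw w (u * s) = 0 := by
            apply hvan
            intro hb
            have h1 : len (u * s) = len u + 1 := by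
              rw [hsdef]; exact len_mul_swap_adj u hij hlt
            have h2 := bruhat_len_le hb
            have heq : w = u * s := bruhat_eq_of_len_le hb (by omega)
            have hu : u = w * s := by rw [heq, mul_assoc, hss, mul_one]
            rw [hu] at hcore
            exact absurd hcore (not_lt.mpr (le_of_lt hlen))
          exact h0 (by rw [hr]; simp only; rw [pu0, pus0, sub_zero])
        · -- descent case
          have hlt2 : len (u * s) < len u := by
            rw [hsdef]; exact len_mul_swap_lt' u hiijj hgt
          have h1 := hmin (u * s) hlt2
          rw [hru u] at h1
          exact h0 (neg_eq_zero.mp h1)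
    intro v
    have := main (len v) v rfl
    rw [hr] at this
    simpa [sub_eq_zero] using this
  · -- part 2
    intro hlen
    have pact_pact : ∀ f : Pol n, pact s (pact s f) = f := by
      intro f
      show rename ⇑s (rename ⇑s f) = f
      rw [rename_rename]
      have hcomp : (⇑s ∘ ⇑s) = id := by
        funext x
        simp only [Function.comp_apply, hsdef, Equiv.swap_apply_self, id_eq]
      rw [hcomp, rename_id, AlgHom.id_apply]
    have hsc : ∀ c : Fin n, s (s c) = c := by
      intro c
      rw [← Equiv.Perm.mul_apply, hss, Equiv.Perm.one_apply]
    set r : Perm (Fin n) → Pol n := fun u => pw w u - pact s (pw w (s * u)) with hr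
    have hrgkm : GKM n r := by
      intro v' c d hcd
      have h1 := hgkm v' c d hcd
      have hcd' : s c ≠ s d := fun h => (ne_of_lt hcd) (s.injective h)
      obtain ⟨g, hgeq⟩ := gkm_pair hgkm hcd' (s * v')
      have h2 : pact s (pw w (s * v')) - pact s (pw w (s * (Equiv.swap c d * v')))
          = (X c - X d) * pact s g := by
        have hsw : s * (Equiv.swap c d * v') = Equiv.swap (s c) (s d) * (s * v') := by
          rw [← mul_assoc, Equiv.mul_swap_eq_swap_mul, mul_assoc]
        rw [hsw]
        show rename ⇑s _ - rename ⇑s _ = _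
        rw [← map_sub, hgeq, map_mul, map_sub, rename_X, rename_X, hsc, hsc]
        rfl
      have hre : r v' - r (Equiv.swap c d * v') =
          (pw w v' - pw w (Equiv.swap c d * v'))
            - (pact s (pw w (s * v')) - pact s (pw w (s * (Equiv.swap c d * v')))) := by
        rw [hr]; ring
      rw [hre, h2]
      exact dvd_sub h1 (Dvd.intro _ rfl)
    have hrhom : ∀ u, (r u).IsHomogeneous (len w) := by
      intro u
      exact (hhom u).sub ((hhom (s * u)).rename_isHomogeneous)
    have hru : ∀ u, r (s * u) = - pact s (r u) := by
      intro u
      rw [hr]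
      simp only
      rw [← mul_assoc, hss, one_mul]
      show pw w (s * u) - pact s (pw w u) =
        -(rename ⇑s (pw w u - pact s (pw w (s * u))))
      rw [map_sub]
      rw [show (rename ⇑s) (pact s (pw w (s * u))) = pw w (s * u) from pact_pact _]
      show pw w (s * u) - rename ⇑s (pw w u) = -(rename ⇑s (pw w u) - pw w (s * u))
      ring
    have main : ∀ k : ℕ, ∀ u : Perm (Fin n), len u = k → r u = 0 := by
      intro k
      induction k using Nat.strong_induction_on with
      | _ k ih =>
        intro u hk
        by_contra h0
        have hmin : ∀ u' : Perm (Fin n), len u' < len u → r u' = 0 :=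
          fun u' h' => ih (len u') (hk ▸ h') u' rfl
        have hneq : u⁻¹ ii ≠ u⁻¹ jj := fun h => (ne_of_lt hiijj) (u⁻¹.injective h)
        rcases lt_or_gt_of_ne hneq with hlt | hgt
        · -- ascent
          have h1 : (X ii - X jj : Pol n) ∣ r u - r (s * u) := by
            have := hrgkm u ii jj hiijj
            rwa [← hsdef] at this
          rw [hru u] at h1
          have h2 : (X ii - X jj : Pol n) ∣ r u - pact s (r u) := by
            have := sub_rename_swap_dvd ii jj (r u)
            rwa [← hsdef] at this
          have h3 : (X ii - X jj : Pol n) ∣ (2 : Pol n) * r u := by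
            have := dvd_add h1 h2
            rwa [show r u - -pact s (r u) + (r u - pact s (r u)) = (2 : Pol n) * r u by ring]
              at this
          have hdvd : (X ii - X jj : Pol n) ∣ r u := by
            have heq : r u = C (2⁻¹ : ℂ) * ((2 : Pol n) * r u) := by
              rw [← mul_assoc, ← map_ofNat (C : ℂ →+* Pol n) 2, ← C_mul]
              norm_num
            rw [heq]
            exact Dvd.dvd.mul_left h3 _
          have hcore : len u < len w := core hrgkm hrhom u h0 hmin hiijj hlt hdvd
          have pu0 : pw w u = 0 :=
            hvan u (fun hb => absurd (bruhat_len_le hb) (not_le.mpr hcore))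
          have pus0 : pw w (s * u) = 0 := by
            apply hvan
            intro hb
            have h1' : len (s * u) = len u + 1 := by
              rw [hsdef]; exact len_swap_mul_adj u hij hlt
            have h2' := bruhat_len_le hb
            have heq : w = s * u := bruhat_eq_of_len_le hb (by omega)
            have hu : u = s * w := by rw [heq, ← mul_assoc, hss, one_mul]
            rw [hu] at hcore
            exact absurd hcore (not_lt.mpr (le_of_lt hlen))
          refine h0 ?_
          rw [hr]
          simp only
          rw [pu0, pus0]
          show (0 : Pol n) - rename ⇑s 0 = 0
          rw [map_zero, sub_zero]
        · -- descent
          have hlt2 : len (s * u) < len u := by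
            rw [hsdef]
            exact len_swap_mul_lt hiijj u hgt
          have h1 := hmin (s * u) hlt2
          rw [hru u] at h1
          have h2 : pact s (r u) = 0 := neg_eq_zero.mp h1
          have hinj := MvPolynomial.rename_injective (R := ℂ) (⇑s) s.injective
          refine h0 (hinj ?_)
          rw [map_zero]
          exact h2
    intro v
    have hmm := main (len (s * v)) (s * v) rfl
    rw [hr] at hmm
    simp only at hmm
    rw [← mul_assoc, hss, one_mul] at hmm
    have := sub_eq_zero.mp hmm
    exact this.symm
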